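/- Let S be a completely regular semigroup generated as a unary semigroup by a finite subset A ⊆ S (that is, the least subset of S containing A and closed under multiplication and the unary operation is S itself). Then Green's relation 𝒟 on S has only finitely many equivalence classes. -/

import Mathlib

set_option linter.unusedSectionVars false

/-- Green's relation 𝓛: `a 𝓛 b` iff `{a} ∪ Sa = {b} ∪ Sb`. -/
def greenL {S : Type*} [Semigroup S] (a b : S) : Prop :=
  (insert a {x | ∃ s : S, x = s * a} : Set S) = insert b {x | ∃ s : S, x = s * b}

/-- Green's relation ℛ: `a ℛ b` iff `{a} ∪ aS = {b} ∪ bS`. -/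
def greenR {S : Type*} [Semigroup S] (a b : S) : Prop :=
  (insert a {x | ∃ s : S, x = a * s} : Set S) = insert b {x | ∃ s : S, x = b * s}

/-- Green's relation 𝒟 = 𝓛 ∘ ℛ. -/
def greenD {S : Type*} [Semigroup S] (a b : S) : Prop :=
  ∃ c : S, greenL a c ∧ greenR c b

namespace CRAux


variable {S : Type*} [Semigroup S] (inv : S → S)

/-- J-divisibility: `a` lies in the principal ideal of `b` (strict witnesses). -/
def Jle (a b : S) : Prop := ∃ x y : S, a = x * (b * y)

/-- Mutual J-divisibility. -/
def Jeq (a b : S) : Prop := Jle a b ∧ Jle b a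

variable (hcr1 : ∀ a : S, a * inv a * a = a)
    (hcr2 : ∀ a : S, inv (inv a) = a)
    (hcr3 : ∀ a : S, a * inv a = inv a * a)

include hcr1 hcr2 hcr3

lemma inv1 : ∀ a : S, inv a * a * inv a = inv a := by
  intro a
  have := hcr1 (inv a)
  rwa [hcr2] at this

lemma eB : ∀ a : S, a * (inv a * a) = a := by
  intro a; rw [← mul_assoc]; exact hcr1 a

lemma eA : ∀ a t : S, a * (inv a * (a * t)) = a * t := by
  intro a t
  rw [← mul_assoc, ← mul_assoc, hcr1]

lemma eD : ∀ a : S, inv a * (a * inv a) = inv a := by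
  intro a; rw [← mul_assoc]; exact inv1 inv hcr1 hcr2 hcr3 a

lemma eC : ∀ a t : S, inv a * (a * (inv a * t)) = inv a * t := by
  intro a t
  rw [← mul_assoc, ← mul_assoc, inv1 inv hcr1 hcr2 hcr3]

lemma eF : ∀ a : S, inv a * (a * a) = a := by
  intro a; rw [← mul_assoc, ← hcr3, hcr1]

lemma eE : ∀ a t : S, inv a * (a * (a * t)) = a * t := by
  intro a t
  rw [← mul_assoc, ← mul_assoc, ← hcr3, hcr1]

lemma eH : ∀ a : S, a * (a * inv a) = a := by
  intro a; rw [hcr3, ← mul_assoc]; exact hcr1 a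

lemma eG : ∀ a t : S, a * (a * (inv a * t)) = a * t := by
  intro a t
  rw [← mul_assoc, ← mul_assoc, mul_assoc a a (inv a), hcr3, ← mul_assoc, hcr1]

lemma jle_refl : ∀ a : S, Jle a a := by
  intro a
  refine ⟨a * inv a, inv a * a, ?_⟩
  simp only [mul_assoc]
  rw [eA inv hcr1 hcr2 hcr3, eB inv hcr1 hcr2 hcr3]

lemma jle_trans : ∀ a b c : S, Jle a b → Jle b c → Jle a c := by
  rintro a b c ⟨x, y, rfl⟩ ⟨u, v, rfl⟩
  exact ⟨x * u, v * y, by simp [mul_assoc]⟩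

lemma jle_mul_left : ∀ a b : S, Jle (a * b) a := by
  intro a b
  refine ⟨a * inv a, inv a * (a * b), ?_⟩
  simp only [mul_assoc]
  rw [eA inv hcr1 hcr2 hcr3, eA inv hcr1 hcr2 hcr3]

lemma jle_mul_right : ∀ a b : S, Jle (a * b) b := by
  intro a b
  refine ⟨a, inv b * b, ?_⟩
  rw [eB inv hcr1 hcr2 hcr3]

lemma cube_restore : ∀ a : S, inv a * (inv a * (a * (a * a))) = a := by
  intro a
  rw [eE inv hcr1 hcr2 hcr3, eF inv hcr1 hcr2 hcr3]

lemma jle_meet : ∀ z x y : S, Jle z x → Jle z y → Jle z (x * y) := by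
  rintro z x y ⟨p, q, hzx⟩ ⟨p', q', hzy⟩
  -- z ≤ z*z
  have h1 : Jle z (z * z) := by
    refine ⟨inv z, inv z * z, ?_⟩
    rw [mul_assoc, eB inv hcr1 hcr2 hcr3, eF inv hcr1 hcr2 hcr3]
  set w := q * p' with hw
  set u := x * (w * y) with hu
  have h2 : Jle (z * z) u := by
    refine ⟨p, q', ?_⟩
    have hzz : z * z = (p * (x * q)) * (p' * (y * q')) := by rw [← hzx, ← hzy]
    rw [hzz, hu, hw]
    simp [mul_assoc]
  -- u ≤ y * x
  have h3 : Jle u (y * x) := by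
    refine ⟨inv u * (inv u * (x * w)), w * (y * (x * (w * y))), ?_⟩
    have key : inv u * (inv u * (x * w)) * (y * x * (w * (y * (x * (w * y)))))
        = inv u * (inv u * (u * (u * u))) := by
      rw [hu]; simp [mul_assoc]
    rw [key, cube_restore inv hcr1 hcr2 hcr3]
  -- y*x ≤ x*y
  have h4 : Jle (y * x) (x * y) := by
    refine ⟨inv (y * x) * (inv (y * x) * y), x * (y * x), ?_⟩
    have key : inv (y * x) * (inv (y * x) * y) * (x * y * (x * (y * x)))
        = inv (y * x) * (inv (y * x) * ((y * x) * ((y * x) * (y * x)))) := by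
      simp [mul_assoc]
    rw [key, cube_restore inv hcr1 hcr2 hcr3]
  exact jle_trans inv hcr1 hcr2 hcr3 _ _ _
    (jle_trans inv hcr1 hcr2 hcr3 _ _ _
      (jle_trans inv hcr1 hcr2 hcr3 _ _ _ h1 h2) h3) h4


lemma padL : ∀ a b : S, (a = b ∨ ∃ s : S, a = s * b) → ∃ s : S, a = s * b := by
  rintro a b (rfl | h)
  · exact ⟨a * inv a, (hcr1 a).symm⟩
  · exact h

lemma padR : ∀ a b : S, (a = b ∨ ∃ s : S, a = b * s) → ∃ s : S, a = b * s := by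
  rintro a b (rfl | h)
  · exact ⟨inv a * a, (eB inv hcr1 hcr2 hcr3 a).symm⟩
  · exact h

omit hcr1 hcr2 hcr3 in
lemma greenL_of : ∀ a c : S, (∃ s : S, a = s * c) → (∃ t : S, c = t * a) → greenL a c := by
  rintro a c ⟨s, hs⟩ ⟨t, ht⟩
  unfold greenL
  ext z
  simp only [Set.mem_insert_iff, Set.mem_setOf_eq]
  constructor
  · rintro (rfl | ⟨r, rfl⟩)
    · exact Or.inr ⟨s, hs⟩
    · exact Or.inr ⟨r * s, by rw [hs, mul_assoc]⟩
  · rintro (rfl | ⟨r, rfl⟩)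
    · exact Or.inr ⟨t, ht⟩
    · exact Or.inr ⟨r * t, by rw [ht, mul_assoc]⟩

omit hcr1 hcr2 hcr3 in
lemma greenR_of : ∀ a c : S, (∃ s : S, a = c * s) → (∃ t : S, c = a * t) → greenR a c := by
  rintro a c ⟨s, hs⟩ ⟨t, ht⟩
  unfold greenR
  ext z
  simp only [Set.mem_insert_iff, Set.mem_setOf_eq]
  constructor
  · rintro (rfl | ⟨r, rfl⟩)
    · exact Or.inr ⟨s, hs⟩
    · exact Or.inr ⟨s * r, by rw [hs, mul_assoc]⟩
  · rintro (rfl | ⟨r, rfl⟩)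
    · exact Or.inr ⟨t, ht⟩
    · exact Or.inr ⟨t * r, by rw [ht, mul_assoc]⟩

lemma greenD_of_jeq : ∀ a b : S, Jeq a b → greenD a b := by
  rintro a b ⟨⟨x, y, hab⟩, ⟨u, v, hba⟩⟩
  set p := x * u with hp
  set q := v * y with hq
  have hpaq : a = p * (a * q) := by
    rw [hp, hq]
    calc a = x * (b * y) := hab
    _ = x * ((u * (a * v)) * y) := by rw [← hba]
    _ = x * u * (a * (v * y)) := by simp [mul_assoc]
  refine ⟨u * a, ?_, ?_⟩
  · refine greenL_of _ _ ⟨inv p * x, ?_⟩ ⟨u, rfl⟩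
    have h1 : inv p * (p * a) = a := by
      calc inv p * (p * a) = inv p * (p * (p * (a * q))) := by conv_lhs => rw [hpaq]
      _ = p * (a * q) := eE inv hcr1 hcr2 hcr3 p (a * q)
      _ = a := hpaq.symm
    calc a = inv p * (p * a) := h1.symm
    _ = inv p * (x * (u * a)) := by rw [hp]; simp [mul_assoc]
    _ = inv p * x * (u * a) := by rw [mul_assoc]
  · have h2 : a * (q * inv q) = a := by
      calc a * (q * inv q) = p * (a * q) * (q * inv q) := by conv_lhs => rw [hpaq]
      _ = p * (a * (q * (q * inv q))) := by simp [mul_assoc]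
      _ = p * (a * q) := by rw [eH inv hcr1 hcr2 hcr3 q]
      _ = a := hpaq.symm
    refine greenR_of _ _ ⟨y * inv q, ?_⟩ ⟨v, by rw [mul_assoc, ← hba]⟩
    calc u * a = u * (a * (q * inv q)) := by rw [h2]
    _ = u * (a * v) * (y * inv q) := by rw [hq]; simp [mul_assoc]
    _ = b * (y * inv q) := by rw [← hba]

lemma jeq_of_greenD : ∀ a b : S, greenD a b → Jeq a b := by
  rintro a b ⟨c, hL, hR⟩
  have hac : a = c ∨ ∃ s : S, a = s * c := by
    have : a ∈ (insert c {x | ∃ s : S, x = s * c} : Set S) := by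
      rw [← hL]; exact Set.mem_insert _ _
    simpa [Set.mem_insert_iff, Set.mem_setOf_eq] using this
  have hca : c = a ∨ ∃ s : S, c = s * a := by
    have : c ∈ (insert a {x | ∃ s : S, x = s * a} : Set S) := by
      rw [hL]; exact Set.mem_insert _ _
    simpa [Set.mem_insert_iff, Set.mem_setOf_eq] using this
  have hcb : c = b ∨ ∃ s : S, c = b * s := by
    have : c ∈ (insert b {x | ∃ s : S, x = b * s} : Set S) := by
      rw [← hR]; exact Set.mem_insert _ _
    simpa [Set.mem_insert_iff, Set.mem_setOf_eq] using this
  have hbc : b = c ∨ ∃ s : S, b = c * s := by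
    have : b ∈ (insert c {x | ∃ s : S, x = c * s} : Set S) := by
      rw [hR]; exact Set.mem_insert _ _
    simpa [Set.mem_insert_iff, Set.mem_setOf_eq] using this
  obtain ⟨s, hs⟩ := padL inv hcr1 hcr2 hcr3 _ _ hac
  obtain ⟨t, ht⟩ := padL inv hcr1 hcr2 hcr3 _ _ hca
  obtain ⟨s', hs'⟩ := padR inv hcr1 hcr2 hcr3 _ _ hcb
  obtain ⟨t', ht'⟩ := padR inv hcr1 hcr2 hcr3 _ _ hbc
  constructor
  · exact ⟨s, s', by rw [hs, hs']⟩
  · exact ⟨t, t', by rw [ht', ht, mul_assoc]⟩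


omit hcr1 hcr2 hcr3 in
lemma foldl_shift : ∀ (t : List S) (a b : S),
    List.foldl (· * ·) (a * b) t = a * List.foldl (· * ·) b t := by
  intro t
  induction t with
  | nil => intro a b; rfl
  | cons c t ih =>
    intro a b
    simp only [List.foldl_cons]
    rw [mul_assoc, ih]

lemma jle_foldl_init : ∀ (t : List S) (h : S), Jle (List.foldl (· * ·) h t) h := by
  intro t
  induction t with
  | nil => intro h; exact jle_refl inv hcr1 hcr2 hcr3 h
  | cons c t ih =>
    intro h
    simp only [List.foldl_cons]
    exact jle_trans inv hcr1 hcr2 hcr3 _ _ _ (ih (h * c))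
      (jle_mul_left inv hcr1 hcr2 hcr3 h c)

lemma jle_foldl_mem : ∀ (t : List S) (h x : S), x ∈ t → Jle (List.foldl (· * ·) h t) x := by
  intro t
  induction t with
  | nil => intro h x hx; exact absurd hx List.not_mem_nil
  | cons c t ih =>
    intro h x hx
    simp only [List.foldl_cons]
    rcases List.mem_cons.mp hx with rfl | hx
    · exact jle_trans inv hcr1 hcr2 hcr3 _ _ _ (jle_foldl_init inv hcr1 hcr2 hcr3 t (h * x))
        (jle_mul_right inv hcr1 hcr2 hcr3 h x)
    · exact ih (h * c) x hx

lemma jle_foldl_of : ∀ (t : List S) (h z : S), Jle z h → (∀ x ∈ t, Jle z x) →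
    Jle z (List.foldl (· * ·) h t) := by
  intro t
  induction t with
  | nil => intro h z hz _; exact hz
  | cons c t ih =>
    intro h z hz hall
    simp only [List.foldl_cons]
    exact ih (h * c) z
      (jle_meet inv hcr1 hcr2 hcr3 z h c hz (hall c List.mem_cons_self))
      (fun x hx => hall x (List.mem_cons_of_mem c hx))

lemma jeq_inv : ∀ a : S, Jeq (inv a) a := by
  intro a
  constructor
  · exact ⟨inv a, inv a, (eD inv hcr1 hcr2 hcr3 a).symm⟩
  · exact ⟨a, a, by rw [← mul_assoc, hcr1]⟩

end CRAux

/-- A completely regular semigroup generated as a unary semigroup by a finite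
set has only finitely many 𝒟-classes. -/
theorem stmt16 {S : Type*} [Semigroup S] (inv : S → S)
    (hcr1 : ∀ a : S, a * inv a * a = a)
    (hcr2 : ∀ a : S, inv (inv a) = a)
    (hcr3 : ∀ a : S, a * inv a = inv a * a)
    (A : Finset S)
    (hgen : ∀ T : Set S, (↑A : Set S) ⊆ T →
      (∀ a ∈ T, ∀ b ∈ T, a * b ∈ T) → (∀ a ∈ T, inv a ∈ T) →
      ∀ s : S, s ∈ T) :
    Set.Finite (Set.range fun a : S => {b : S | greenD a b}) := by
  classical
  open CRAux in
  have jtrans := CRAux.jle_trans inv hcr1 hcr2 hcr3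
  have jrefl := CRAux.jle_refl inv hcr1 hcr2 hcr3
  have jmeet := CRAux.jle_meet inv hcr1 hcr2 hcr3
  have jml := CRAux.jle_mul_left inv hcr1 hcr2 hcr3
  have jmr := CRAux.jle_mul_right inv hcr1 hcr2 hcr3
  have jfi := CRAux.jle_foldl_init inv hcr1 hcr2 hcr3
  have jfm := CRAux.jle_foldl_mem inv hcr1 hcr2 hcr3
  have jfo := CRAux.jle_foldl_of inv hcr1 hcr2 hcr3
  -- generation: every element is Jeq to a product of generators
  have hGEN : ∀ s : S, ∃ (h : S) (t : List S), h ∈ A ∧ (∀ x ∈ t, x ∈ A) ∧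
      CRAux.Jeq s (List.foldl (· * ·) h t) := by
    apply hgen {s | ∃ (h : S) (t : List S), h ∈ A ∧ (∀ x ∈ t, x ∈ A) ∧
      CRAux.Jeq s (List.foldl (· * ·) h t)}
    · intro a ha
      exact ⟨a, [], ha, by simp, jrefl a, jrefl a⟩
    · rintro s ⟨h, t, hh, ht, hsP, hPs⟩ s' ⟨h', t', hh', ht', hsP', hPs'⟩
      refine ⟨h, t ++ h' :: t', hh, ?_, ?_⟩
      · intro x hx
        rcases List.mem_append.mp hx with hx | hx
        · exact ht x hx
        · rcases List.mem_cons.mp hx with rfl | hx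
          · exact hh'
          · exact ht' x hx
      · have hsplit : List.foldl (· * ·) h (t ++ h' :: t')
            = List.foldl (· * ·) h t * List.foldl (· * ·) h' t' := by
          rw [List.foldl_append]
          simp only [List.foldl_cons]
          rw [CRAux.foldl_shift]
        rw [hsplit]
        set P := List.foldl (· * ·) h t
        set P' := List.foldl (· * ·) h' t'
        constructor
        · exact jmeet _ _ _ (jtrans _ _ _ (jml s s') hsP) (jtrans _ _ _ (jmr s s') hsP')
        · exact jmeet _ _ _ (jtrans _ _ _ (jml P P') hPs) (jtrans _ _ _ (jmr P P') hPs')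
    · rintro s ⟨h, t, hh, ht, hsP, hPs⟩
      obtain ⟨h1, h2⟩ := CRAux.jeq_inv inv hcr1 hcr2 hcr3 s
      exact ⟨h, t, hh, ht, jtrans _ _ _ h1 hsP, jtrans _ _ _ hPs h2⟩
  -- the invariant
  set χ : S → Finset S := fun s => A.filter (fun x => CRAux.Jle s x) with hχ
  have hmain : ∀ a b : S, greenD a b ↔ χ a = χ b := by
    intro a b
    constructor
    · intro hD
      obtain ⟨hab, hba⟩ := CRAux.jeq_of_greenD inv hcr1 hcr2 hcr3 a b hD
      ext x
      simp only [hχ, Finset.mem_filter]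
      exact and_congr_right fun _ =>
        ⟨fun hx => jtrans _ _ _ hba hx, fun hx => jtrans _ _ _ hab hx⟩
    · intro hEq
      have half : ∀ a b : S, χ a = χ b → CRAux.Jle b a := by
        intro a b hEq
        obtain ⟨h, t, hh, ht, hsP, hPs⟩ := hGEN a
        have hbh : CRAux.Jle b h := by
          have : h ∈ χ a := by
            simp only [hχ, Finset.mem_filter]
            exact ⟨hh, jtrans _ _ _ hsP (jfi t h)⟩
          rw [hEq] at this
          simp only [hχ, Finset.mem_filter] at this
          exact this.2
        have hbt : ∀ x ∈ t, CRAux.Jle b x := by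
          intro x hx
          have : x ∈ χ a := by
            simp only [hχ, Finset.mem_filter]
            exact ⟨ht x hx, jtrans _ _ _ hsP (jfm t h x hx)⟩
          rw [hEq] at this
          simp only [hχ, Finset.mem_filter] at this
          exact this.2
        exact jtrans _ _ _ (jfo t h b hbh hbt) hPs
      exact CRAux.greenD_of_jeq inv hcr1 hcr2 hcr3 a b ⟨half b a hEq.symm, half a b hEq⟩
  -- counting
  apply Set.Finite.subset ((A.powerset.finite_toSet).image (fun B => {b : S | χ b = B}))
  rintro _ ⟨a, rfl⟩
  refine ⟨χ a, ?_, ?_⟩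
  · simp only [Finset.coe_powerset, Set.mem_preimage, Set.mem_powerset_iff, Finset.coe_subset,
      hχ]
    exact Finset.filter_subset _ _
  · ext b
    simp only [Set.mem_setOf_eq]
    rw [hmain a b, eq_comm]
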